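/- Let A : L²(M) → Y be compact with v_n ∈ L^∞(M) and Σ_n σ_n^η ‖v_n‖²_{L^∞} < ∞ for some η ∈ (0,2]. Then for any weights c_n ≥ c_0 > 0, the operator T^c_α : Y → L^∞(M) is bounded with ‖T^c_α‖_{Y→L^∞} ≤ (σ_1^{1−η/2}/(α c_0)) · ‖(σ_n^{η/2}‖v_n‖_∞)_n‖_{ℓ²}. -/

import Mathlib

open MeasureTheory
open scoped RealInnerProductSpace ENNReal

/-- if `v_n ∈ L^∞(M)` and `Σ_n σ_n^η ‖v_n‖²_{L^∞} < ∞` for some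
`η ∈ (0,2]`, then for any weights `c_n ≥ c_0 > 0` the operator
`T^c_α : Y → L^∞(M)` is bounded with
`‖T^c_α y‖_{L^∞} ≤ (σ_1^{1−η/2}/(α c_0)) ‖(σ_n^{η/2}‖v_n‖_∞)_n‖_{ℓ²} ‖y‖`. -/
theorem stmt16
    {M : Type*} [MeasureSpace M]
    {Y : Type*} [NormedAddCommGroup Y] [InnerProductSpace ℝ Y] [CompleteSpace Y]
    (u : ℕ → Y) (hu : Orthonormal ℝ u)
    (v : ℕ → M → ℝ)
    (hv2 : ∀ n, MemLp (v n) 2 volume) (hvinf : ∀ n, MemLp (v n) ⊤ volume)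
    (hvON : ∀ n m, ∫ x, v n x * v m x = if n = m then (1 : ℝ) else 0)
    (σ : ℕ → ℝ) (hσpos : ∀ n, 0 < σ n) (hσanti : Antitone σ)
    (hσ0 : Filter.Tendsto σ Filter.atTop (nhds 0))
    (η : ℝ) (hη : 0 < η) (hη2 : η ≤ 2)
    (hgrowth : Summable (fun n => σ n ^ η * (eLpNorm (v n) ⊤ volume).toReal ^ 2))
    (c : ℕ → ℝ) (c₀ : ℝ) (hc₀ : 0 < c₀) (hc : ∀ n, c₀ ≤ c n)
    (α : ℝ) (hα : 0 < α) :
    ∀ y : Y,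
      eLpNorm (fun x => ∑' n, (σ n / ((σ n) ^ 2 + α * c n)) * ⟪y, u n⟫ * v n x)
          ⊤ volume ≤
        ENNReal.ofReal
          ((σ 0 ^ (1 - η / 2) / (α * c₀)) *
            Real.sqrt (∑' n, σ n ^ η * (eLpNorm (v n) ⊤ volume).toReal ^ 2) *
            ‖y‖) := by
  intro y
  set V : ℕ → ℝ := fun n => (eLpNorm (v n) ⊤ volume).toReal with hV
  have hVnn : ∀ n, 0 ≤ V n := fun n => ENNReal.toReal_nonneg
  set C : ℝ := σ 0 ^ (1 - η / 2) / (α * c₀) with hCdef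
  have hCnn : 0 ≤ C :=
    div_nonneg (Real.rpow_nonneg (hσpos 0).le _) (by positivity)
  set S : ℝ := ∑' n, σ n ^ η * V n ^ 2 with hSdef
  have hSnn : 0 ≤ S := tsum_nonneg fun n =>
    mul_nonneg (Real.rpow_nonneg (hσpos n).le _) (sq_nonneg _)
  set b : ℕ → ℝ := fun n => |⟪y, u n⟫| * (σ n ^ (η / 2) * V n) with hbdef
  have hbnn : ∀ n, 0 ≤ b n := fun n =>
    mul_nonneg (abs_nonneg _) (mul_nonneg (Real.rpow_nonneg (hσpos n).le _) (hVnn n))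
  have hsq : ∀ n, σ n ^ (η / 2) * σ n ^ (η / 2) = σ n ^ η := fun n => by
    rw [← Real.rpow_add (hσpos n)]; ring_nf
  have hysum : Summable (fun n => ‖⟪u n, y⟫‖ ^ 2) := hu.inner_products_summable y
  have hysum' : Summable (fun n => |⟪y, u n⟫| ^ 2) := by
    simpa [Real.norm_eq_abs, real_inner_comm] using hysum
  -- summability of b
  have hbsum : Summable b := by
    apply Summable.of_nonneg_of_le hbnn (fun n => ?_)
      ((hysum'.add hgrowth).div_const 2)
    have h := sq_nonneg (|⟪y, u n⟫| - σ n ^ (η / 2) * V n)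
    have h2 : (σ n ^ (η / 2) * V n) ^ 2 = σ n ^ η * V n ^ 2 := by
      rw [mul_pow, sq, hsq n]
    simp only [hbdef]
    nlinarith [hVnn n, Real.rpow_nonneg (hσpos n).le (η / 2)]
  -- Bessel
  have hbessel : ∑' n, |⟪y, u n⟫| ^ 2 ≤ ‖y‖ ^ 2 := by
    have := hu.tsum_inner_products_le y
    simpa [Real.norm_eq_abs, real_inner_comm] using this
  -- Cauchy–Schwarz on tsum
  have hbB : ∑' n, b n ≤ ‖y‖ * Real.sqrt S := by
    apply tsum_le_of_sum_le' (by positivity)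
    intro s
    have h1 := Finset.sum_mul_sq_le_sq_mul_sq s (fun n => |⟪y, u n⟫|)
      (fun n => σ n ^ (η / 2) * V n)
    have h2 : ∑ n ∈ s, |⟪y, u n⟫| ^ 2 ≤ ‖y‖ ^ 2 :=
      le_trans (Summable.sum_le_tsum s (fun n _ => by positivity) hysum') hbessel
    have h3 : ∑ n ∈ s, (σ n ^ (η / 2) * V n) ^ 2 ≤ S := by
      have : ∀ n, (σ n ^ (η / 2) * V n) ^ 2 = σ n ^ η * V n ^ 2 := fun n => by
        rw [mul_pow, sq, hsq n]
      simp only [this]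
      exact Summable.sum_le_tsum s (fun n _ =>
        mul_nonneg (Real.rpow_nonneg (hσpos n).le _) (sq_nonneg _)) hgrowth
    have hsum_nn : 0 ≤ ∑ n ∈ s, b n := Finset.sum_nonneg fun n _ => hbnn n
    have h4 : (∑ n ∈ s, b n) ^ 2 ≤ ‖y‖ ^ 2 * S := by
      calc (∑ n ∈ s, b n) ^ 2
          ≤ (∑ n ∈ s, |⟪y, u n⟫| ^ 2) * ∑ n ∈ s, (σ n ^ (η / 2) * V n) ^ 2 := h1
        _ ≤ ‖y‖ ^ 2 * S := by
            apply mul_le_mul h2 h3 (Finset.sum_nonneg fun n _ => by positivity)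
              (by positivity)
    calc ∑ n ∈ s, b n = Real.sqrt ((∑ n ∈ s, b n) ^ 2) := (Real.sqrt_sq hsum_nn).symm
      _ ≤ Real.sqrt (‖y‖ ^ 2 * S) := Real.sqrt_le_sqrt h4
      _ = ‖y‖ * Real.sqrt S := by
          rw [Real.sqrt_mul (sq_nonneg _), Real.sqrt_sq (norm_nonneg y)]
  -- coefficient bound
  have hcoef : ∀ n, σ n / (σ n ^ 2 + α * c n) ≤ C * σ n ^ (η / 2) := by
    intro n
    have hd : 0 < σ n ^ 2 + α * c n := by nlinarith [hσpos n, hc n]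
    have h1 : σ n / (σ n ^ 2 + α * c n) ≤ σ n / (α * c₀) := by
      apply div_le_div_of_nonneg_left (hσpos n).le (by positivity)
      nlinarith [hc n, sq_nonneg (σ n)]
    have h2 : σ n ≤ σ 0 ^ (1 - η / 2) * σ n ^ (η / 2) := by
      have hs : σ n = σ n ^ (1 - η / 2) * σ n ^ (η / 2) := by
        rw [← Real.rpow_add (hσpos n)]; ring_nf; rw [Real.rpow_one]
      calc σ n = σ n ^ (1 - η / 2) * σ n ^ (η / 2) := hs
        _ ≤ σ 0 ^ (1 - η / 2) * σ n ^ (η / 2) :=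
          mul_le_mul_of_nonneg_right
            (Real.rpow_le_rpow (hσpos n).le (hσanti (Nat.zero_le n)) (by linarith))
            (Real.rpow_nonneg (hσpos n).le _)
    calc σ n / (σ n ^ 2 + α * c n) ≤ σ n / (α * c₀) := h1
      _ ≤ (σ 0 ^ (1 - η / 2) * σ n ^ (η / 2)) / (α * c₀) := by
          apply div_le_div_of_nonneg_right h2 (by positivity)
      _ = C * σ n ^ (η / 2) := by rw [hCdef]; ring
  -- a.e. bound on v n
  have hvb : ∀ᵐ x ∂(volume : Measure M), ∀ n, |v n x| ≤ V n := by
    rw [MeasureTheory.ae_all_iff]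
    intro n
    have h1 := enorm_ae_le_eLpNormEssSup (v n) volume
    filter_upwards [h1] with x hx
    have h2 : (‖v n x‖₊ : ℝ≥0∞) ≤ eLpNorm (v n) ⊤ volume := by
      rwa [eLpNorm_exponent_top]
    have h3 : ((‖v n x‖₊ : ℝ≥0∞)).toReal ≤ V n :=
      ENNReal.toReal_mono (hvinf n).2.ne h2
    simpa [Real.norm_eq_abs] using h3
  -- main a.e. bound on the sum
  have hmain : ∀ᵐ x ∂(volume : Measure M),
      ‖∑' n, (σ n / ((σ n) ^ 2 + α * c n)) * ⟪y, u n⟫ * v n x‖ ≤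
        C * Real.sqrt S * ‖y‖ := by
    filter_upwards [hvb] with x hx
    have hterm : ∀ n, ‖(σ n / ((σ n) ^ 2 + α * c n)) * ⟪y, u n⟫ * v n x‖ ≤ C * b n := by
      intro n
      have hd : 0 < σ n ^ 2 + α * c n := by nlinarith [hσpos n, hc n]
      have hcnn : 0 ≤ σ n / (σ n ^ 2 + α * c n) := div_nonneg (hσpos n).le hd.le
      rw [Real.norm_eq_abs, abs_mul, abs_mul, abs_of_nonneg hcnn]
      calc σ n / (σ n ^ 2 + α * c n) * |⟪y, u n⟫| * |v n x|
          ≤ (C * σ n ^ (η / 2)) * |⟪y, u n⟫| * V n := by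
            apply mul_le_mul (mul_le_mul_of_nonneg_right (hcoef n) (abs_nonneg _))
              (hx n) (abs_nonneg _)
            exact mul_nonneg (mul_nonneg hCnn (Real.rpow_nonneg (hσpos n).le _))
              (abs_nonneg _)
        _ = C * b n := by rw [hbdef]; ring
    have hsumn : Summable (fun n => ‖(σ n / ((σ n) ^ 2 + α * c n)) * ⟪y, u n⟫ * v n x‖) := by
      apply Summable.of_nonneg_of_le (fun n => norm_nonneg _) hterm (hbsum.mul_left C)
    calc ‖∑' n, (σ n / ((σ n) ^ 2 + α * c n)) * ⟪y, u n⟫ * v n x‖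
        ≤ ∑' n, ‖(σ n / ((σ n) ^ 2 + α * c n)) * ⟪y, u n⟫ * v n x‖ :=
          norm_tsum_le_tsum_norm hsumn
      _ ≤ ∑' n, C * b n := Summable.tsum_le_tsum hterm hsumn (hbsum.mul_left C)
      _ = C * ∑' n, b n := tsum_mul_left
      _ ≤ C * (‖y‖ * Real.sqrt S) := mul_le_mul_of_nonneg_left hbB hCnn
      _ = C * Real.sqrt S * ‖y‖ := by ring
  calc eLpNorm (fun x => ∑' n, (σ n / ((σ n) ^ 2 + α * c n)) * ⟪y, u n⟫ * v n x) ⊤ volume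
      = eLpNormEssSup (fun x => ∑' n, (σ n / ((σ n) ^ 2 + α * c n)) * ⟪y, u n⟫ * v n x)
        volume := eLpNorm_exponent_top
    _ ≤ ENNReal.ofReal (C * Real.sqrt S * ‖y‖) := eLpNormEssSup_le_of_ae_bound hmain
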